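/- Let a > 0 and let φ : [0,∞) → ℝ be differentiable with φ(t) > 0, φ'(t) ≥ 0, and φ'(t) ≤ a·φ(t) for all t ≥ 0. Then for every T > 0: 2·∫₀^T (T−t)·φ(t) dt ≤ (a + 3/T)·∫₀^T (T−t)²·φ(t) dt. -/

import Mathlib

open MeasureTheory intervalIntegral Set

/-- If `φ > 0` is differentiable on `[0,∞)` with `0 ≤ φ' ≤ a·φ` for some `a > 0`, then for
every `T > 0`: `2·∫₀ᵀ (T - t)·φ(t) dt ≤ (a + 3/T)·∫₀ᵀ (T - t)²·φ(t) dt`. -/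
theorem stmt_5 (a : ℝ) (ha : 0 < a) (φ φ' : ℝ → ℝ)
    (hderiv : ∀ t : ℝ, 0 ≤ t → HasDerivAt φ (φ' t) t)
    (hpos : ∀ t : ℝ, 0 ≤ t → 0 < φ t)
    (hmono : ∀ t : ℝ, 0 ≤ t → 0 ≤ φ' t)
    (hle : ∀ t : ℝ, 0 ≤ t → φ' t ≤ a * φ t) :
    ∀ T : ℝ, 0 < T →
      2 * ∫ t in (0 : ℝ)..T, (T - t) * φ t ≤
        (a + 3 / T) * ∫ t in (0 : ℝ)..T, (T - t) ^ 2 * φ t := by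
  intro T hT
  have hT0 : (0:ℝ) ≤ T := hT.le
  have huIcc : Set.uIcc (0:ℝ) T = Set.Icc 0 T := Set.uIcc_of_le hT0
  -- φ is monotone on [0,∞)
  have hcontIci : ContinuousOn φ (Set.Ici 0) := fun t ht =>
    ((hderiv t ht).continuousAt).continuousWithinAt
  have hmonoφ : MonotoneOn φ (Set.Ici (0:ℝ)) := by
    apply monotoneOn_of_hasDerivWithinAt_nonneg (convex_Ici 0) hcontIci
    · intro x hx
      rw [interior_Ici] at hx
      exact ((hderiv x (le_of_lt hx)).hasDerivWithinAt)
    · intro x hx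
      rw [interior_Ici] at hx
      exact hmono x (le_of_lt hx)
  have hcont : ContinuousOn φ (Set.Icc 0 T) := hcontIci.mono (fun x hx => hx.1)
  have hφint : IntervalIntegrable φ volume 0 T := by
    rw [← huIcc] at hcont; exact hcont.intervalIntegrable
  -- interval integrability of φ'
  have hφ'int : IntervalIntegrable φ' volume 0 T := by
    rw [intervalIntegrable_iff_integrableOn_Ioc_of_le hT0]
    have hms : AEStronglyMeasurable φ' (volume.restrict (Set.Ioc 0 T)) := by
      have heq : ∀ t ∈ Set.Ioc (0:ℝ) T, deriv φ t = φ' t := fun t ht =>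
        (hderiv t ht.1.le).deriv
      exact ((measurable_deriv φ).aestronglyMeasurable).congr
        ((ae_restrict_iff' measurableSet_Ioc).mpr (ae_of_all _ heq))
    apply Integrable.mono' (g := fun _ => a * φ T)
      (integrableOn_const measure_Ioc_lt_top.ne) hms
    refine (ae_restrict_iff' measurableSet_Ioc).mpr (ae_of_all _ fun t ht => ?_)
    have h1 : 0 ≤ φ' t := hmono t ht.1.le
    have h2 : φ' t ≤ a * φ t := hle t ht.1.le
    have h3 : φ t ≤ φ T := hmonoφ (Set.mem_Ici.mpr ht.1.le) (Set.mem_Ici.mpr hT0) ht.2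
    rw [Real.norm_eq_abs, abs_of_nonneg h1]
    exact h2.trans (by nlinarith)
  -- integration by parts
  have hu : ∀ x ∈ Set.uIcc (0:ℝ) T, HasDerivAt (fun t => (T - t)^2) (-(2 * (T - x))) x := by
    intro x _
    have h : HasDerivAt (fun t => (T - t)^2) ((2:ℕ) * (T - x)^(2-1) * (0 - 1)) x :=
      (((hasDerivAt_const x T).sub (hasDerivAt_id x))).pow 2
    convert h using 1; ring
  have hv : ∀ x ∈ Set.uIcc (0:ℝ) T, HasDerivAt φ (φ' x) x := by
    intro x hx
    rw [huIcc] at hx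
    exact hderiv x hx.1
  have hu'int : IntervalIntegrable (fun x => -(2 * (T - x))) volume 0 T :=
    (Continuous.intervalIntegrable (by continuity) 0 T)
  have hIBP := integral_mul_deriv_eq_deriv_mul hu hv hu'int hφ'int
  have hkey : ∫ x in (0:ℝ)..T, (T - x)^2 * φ' x
      = -(T^2 * φ 0) + 2 * ∫ t in (0:ℝ)..T, (T - t) * φ t := by
    rw [hIBP]
    have : (∫ x in (0:ℝ)..T, -(2 * (T - x)) * φ x)
        = -(2 * ∫ t in (0:ℝ)..T, (T - t) * φ t) := by
      rw [← intervalIntegral.integral_const_mul, ← intervalIntegral.integral_neg]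
      apply intervalIntegral.integral_congr
      intro x _; ring
    rw [this]; ring
  -- bound: ∫ (T-x)² φ' ≤ a * I2
  have hsq : ContinuousOn (fun x : ℝ => (T - x)^2) (Set.uIcc 0 T) :=
    (Continuous.continuousOn (by continuity))
  have hint1 : IntervalIntegrable (fun x => (T - x)^2 * φ' x) volume 0 T :=
    hφ'int.continuousOn_mul hsq
  have hint2 : IntervalIntegrable (fun x => (T - x)^2 * (a * φ x)) volume 0 T :=
    ((hφint.const_mul a).continuousOn_mul hsq)
  have hB : ∫ x in (0:ℝ)..T, (T - x)^2 * φ' x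
      ≤ a * ∫ t in (0:ℝ)..T, (T - t)^2 * φ t := by
    have h1 : ∫ x in (0:ℝ)..T, (T - x)^2 * φ' x
        ≤ ∫ x in (0:ℝ)..T, (T - x)^2 * (a * φ x) := by
      apply intervalIntegral.integral_mono_on hT0 hint1 hint2
      intro x hx
      exact mul_le_mul_of_nonneg_left (hle x hx.1) (sq_nonneg _)
    have h2 : ∫ x in (0:ℝ)..T, (T - x)^2 * (a * φ x)
        = a * ∫ t in (0:ℝ)..T, (T - t)^2 * φ t := by
      rw [← intervalIntegral.integral_const_mul]
      apply intervalIntegral.integral_congr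
      intro x _; ring
    linarith
  -- lower bound on I2
  have hI2lb : φ 0 * (T^3 / 3) ≤ ∫ t in (0:ℝ)..T, (T - t)^2 * φ t := by
    have h1 : ∫ x in (0:ℝ)..T, (T - x)^2 * φ 0
        ≤ ∫ t in (0:ℝ)..T, (T - t)^2 * φ t := by
      apply intervalIntegral.integral_mono_on hT0
        (Continuous.intervalIntegrable (by continuity) 0 T)
        (by rw [← huIcc] at hcont
            exact hcont.intervalIntegrable.continuousOn_mul hsq)
      intro x hx
      exact mul_le_mul_of_nonneg_left
        (hmonoφ (Set.self_mem_Ici) (Set.mem_Ici.mpr hx.1) hx.1) (sq_nonneg _)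
    have h2 : ∫ x in (0:ℝ)..T, (T - x)^2 * φ 0 = φ 0 * (T^3 / 3) := by
      rw [intervalIntegral.integral_mul_const]
      have h3 : (∫ x in (0:ℝ)..T, (T - x)^2) = ∫ x in (T-T:ℝ)..(T-0:ℝ), x^2 :=
        intervalIntegral.integral_comp_sub_left (fun x => x^2) T
      rw [h3]
      norm_num [integral_pow]
      ring
    linarith
  -- combine
  have hφ0 : 0 < φ 0 := hpos 0 le_rfl
  have hTinv : 0 < 3 / T := by positivity
  have hfinal : T^2 * φ 0 ≤ (3 / T) * ∫ t in (0:ℝ)..T, (T - t)^2 * φ t := by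
    have := mul_le_mul_of_nonneg_left hI2lb hTinv.le
    have heq : (3 / T) * (φ 0 * (T^3/3)) = T^2 * φ 0 := by
      field_simp
    linarith
  nlinarith [hkey, hB, hfinal]
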